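/- Let K ≥ 1, let Ψ > 0, let λ_1 ≥ λ_2 ≥ ⋯ ≥ λ_K > 0, let ρ_{1,min}, …, ρ_{K,min} be nonnegative reals, and let Δρ ≥ 0. For any nonnegative reals Δρ_1, …, Δρ_K with Σ_{i=1}^{K} Δρ_i = Δρ, setting ρ_i = ρ_{i,min} + Δρ_i, the unicast sum rate Σ_{i=1}^{K} log₂(1 + ρ_i λ_i / (Σ_{j=1}^{i-1} ρ_j λ_i + Ψ)) is at most its value at the allocation Δρ_1 = Δρ and Δρ_i = 0 for i ≥ 2, i.e., at most Σ_{i=1}^{K} log₂(1 + ρ̃_i λ_i / (Σ_{j=1}^{i-1} ρ̃_j λ_i + Ψ)) where ρ̃_1 = ρ_{1,min} + Δρ and ρ̃_i = ρ_{i,min} for i ≥ 2. -/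

import Mathlib

open Finset Real

private lemma abel_rearrange (F G : ℕ → ℝ) (K : ℕ) (hK : 1 ≤ K) :
    ∑ i ∈ Icc 1 K, (F i - G i)
      = F K - G 1 + ∑ i ∈ Icc 1 (K - 1), (F i - G (i + 1)) := by
  induction K, hK using Nat.le_induction with
  | base => simp
  | succ n hn ih =>
    have h1 : n - 1 + 1 = n := Nat.succ_pred_eq_of_pos hn
    rw [Finset.sum_Icc_succ_top (by omega) (fun i => F i - G i), ih]
    have h2 : n + 1 - 1 = n := rfl
    rw [h2]
    have h3 : ∑ i ∈ Icc 1 n, (F i - G (i + 1))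
        = ∑ i ∈ Icc 1 (n - 1), (F i - G (i + 1)) + (F n - G (n + 1)) := by
      conv_lhs => rw [← h1]
      rw [Finset.sum_Icc_succ_top (by omega) (fun i => F i - G (i + 1)), h1]
    rw [h3]
    ring

private lemma key_mono {Ψ a b x y : ℝ} (hΨ : 0 < Ψ) (hb : 0 < b) (hba : b ≤ a)
    (hx : 0 ≤ x) (hxy : x ≤ y) :
    Real.logb 2 (x * a + Ψ) - Real.logb 2 (x * b + Ψ)
      ≤ Real.logb 2 (y * a + Ψ) - Real.logb 2 (y * b + Ψ) := by
  have ha : 0 < a := lt_of_lt_of_le hb hba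
  have hy : 0 ≤ y := hx.trans hxy
  have h1 : 0 < x * a + Ψ := by positivity
  have h2 : 0 < x * b + Ψ := by positivity
  have h3 : 0 < y * a + Ψ := by positivity
  have h4 : 0 < y * b + Ψ := by positivity
  rw [← Real.logb_div h1.ne' h2.ne', ← Real.logb_div h3.ne' h4.ne']
  apply Real.logb_le_logb_of_le (by norm_num) (by positivity)
  rw [div_le_div_iff₀ h2 h4]
  nlinarith [mul_nonneg hΨ.le (mul_nonneg (sub_nonneg.2 hxy) (sub_nonneg.2 hba))]

/-- Proposition 2: the unicast sum rate is maximized by allocating all excess power to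
the strongest user `U_1`. -/
theorem stmt_7 (K : ℕ) (hK : 1 ≤ K) (Ψ : ℝ) (hΨ : 0 < Ψ)
    (lam : ℕ → ℝ) (hlampos : ∀ i, 1 ≤ i → i ≤ K → 0 < lam i)
    (hlamsort : ∀ i j, 1 ≤ i → i ≤ j → j ≤ K → lam j ≤ lam i)
    (ρmin : ℕ → ℝ) (hρmin : ∀ i, 1 ≤ i → i ≤ K → 0 ≤ ρmin i)
    (Δρtot : ℝ) (hΔtot : 0 ≤ Δρtot)
    (Δρ : ℕ → ℝ) (hΔ : ∀ i, 1 ≤ i → i ≤ K → 0 ≤ Δρ i)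
    (hsum : ∑ i ∈ Finset.Icc 1 K, Δρ i = Δρtot) :
    (∑ i ∈ Finset.Icc 1 K, Real.logb 2 (1 + (ρmin i + Δρ i) * lam i /
        (∑ j ∈ Finset.Icc 1 (i - 1), (ρmin j + Δρ j) * lam i + Ψ)))
      ≤ ∑ i ∈ Finset.Icc 1 K, Real.logb 2
          (1 + (if i = 1 then ρmin 1 + Δρtot else ρmin i) * lam i /
            (∑ j ∈ Finset.Icc 1 (i - 1),
                (if j = 1 then ρmin 1 + Δρtot else ρmin j) * lam i + Ψ)) := by
  set ρ : ℕ → ℝ := fun i => ρmin i + Δρ i with hρdef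
  set ρ' : ℕ → ℝ := fun i => if i = 1 then ρmin 1 + Δρtot else ρmin i with hρ'def
  set S : ℕ → ℝ := fun n => ∑ j ∈ Icc 1 n, ρ j with hSdef
  set S' : ℕ → ℝ := fun n => ∑ j ∈ Icc 1 n, ρ' j with hS'def
  have hρnn : ∀ i, 1 ≤ i → i ≤ K → 0 ≤ ρ i := fun i h1 h2 =>
    add_nonneg (hρmin i h1 h2) (hΔ i h1 h2)
  have hρ'nn : ∀ i, 1 ≤ i → i ≤ K → 0 ≤ ρ' i := by
    intro i h1 h2
    by_cases h : i = 1
    · simp only [hρ'def, h, if_pos rfl]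
      exact add_nonneg (hρmin 1 le_rfl hK) hΔtot
    · simp only [hρ'def, if_neg h]
      exact hρmin i h1 h2
  have hSnn : ∀ n, n ≤ K → 0 ≤ S n := by
    intro n hn
    apply Finset.sum_nonneg
    intro j hj
    rw [Finset.mem_Icc] at hj
    exact hρnn j hj.1 (hj.2.trans hn)
  have hS'nn : ∀ n, n ≤ K → 0 ≤ S' n := by
    intro n hn
    apply Finset.sum_nonneg
    intro j hj
    rw [Finset.mem_Icc] at hj
    exact hρ'nn j hj.1 (hj.2.trans hn)
  have hsplit : ∀ n, 1 ≤ n → n ≤ K →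
      S' n = (∑ j ∈ Icc 1 n, ρmin j) + Δρtot := by
    intro n h1 h2
    have : ∀ j ∈ Icc 1 n, ρ' j = ρmin j + (if j = 1 then Δρtot else 0) := by
      intro j hj
      by_cases h : j = 1 <;> simp [hρ'def, h]
    rw [hS'def]
    simp only []
    rw [Finset.sum_congr rfl this, Finset.sum_add_distrib]
    congr 1
    rw [Finset.sum_ite_eq' (Icc 1 n) 1 (fun _ => Δρtot)]
    simp [h1]
  have hSsplit : ∀ n, S n = (∑ j ∈ Icc 1 n, ρmin j) + ∑ j ∈ Icc 1 n, Δρ j := by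
    intro n
    rw [hSdef]
    exact Finset.sum_add_distrib
  have hmono : ∀ n, n ≤ K → S n ≤ S' n := by
    intro n hn
    rcases Nat.eq_zero_or_pos n with rfl | hpos
    · simp [hSdef, hS'def]
    · rw [hsplit n hpos hn, hSsplit n]
      have h3 : ∑ j ∈ Icc 1 n, Δρ j ≤ Δρtot := by
        rw [← hsum]
        apply Finset.sum_le_sum_of_subset_of_nonneg (Finset.Icc_subset_Icc_right hn)
        intro j hj _
        rw [Finset.mem_Icc] at hj
        exact hΔ j hj.1 hj.2
      linarith
  have hSK : S K = S' K := by
    rw [hsplit K hK le_rfl, hSsplit K, hsum]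
  have hstep : ∀ i, 1 ≤ i → S i = S (i - 1) + ρ i := by
    intro i hi
    have h1 : i - 1 + 1 = i := Nat.succ_pred_eq_of_pos hi
    rw [hSdef]
    simp only []
    conv_lhs => rw [← h1]
    rw [Finset.sum_Icc_succ_top (by omega) ρ, h1]
  have hstep' : ∀ i, 1 ≤ i → S' i = S' (i - 1) + ρ' i := by
    intro i hi
    have h1 : i - 1 + 1 = i := Nat.succ_pred_eq_of_pos hi
    rw [hS'def]
    simp only []
    conv_lhs => rw [← h1]
    rw [Finset.sum_Icc_succ_top (by omega) ρ', h1]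
  -- rewrite each side
  have hLHS : (∑ i ∈ Icc 1 K, Real.logb 2 (1 + ρ i * lam i /
        (∑ j ∈ Icc 1 (i - 1), ρ j * lam i + Ψ)))
      = ∑ i ∈ Icc 1 K, ((fun i => Real.logb 2 (S i * lam i + Ψ)) i
          - (fun i => Real.logb 2 (S (i - 1) * lam i + Ψ)) i) := by
    apply Finset.sum_congr rfl
    intro i hi
    rw [Finset.mem_Icc] at hi
    have hlam : 0 < lam i := hlampos i hi.1 hi.2
    have hD : 0 < S (i - 1) * lam i + Ψ :=
      add_pos_of_nonneg_of_pos (mul_nonneg (hSnn (i - 1) (by omega)) hlam.le) hΨ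
    have hN : 0 < S i * lam i + Ψ :=
      add_pos_of_nonneg_of_pos (mul_nonneg (hSnn i hi.2) hlam.le) hΨ
    have hden : ∑ j ∈ Icc 1 (i - 1), ρ j * lam i = S (i - 1) * lam i := by
      rw [hSdef, Finset.sum_mul]
    rw [hden]
    have harg : 1 + ρ i * lam i / (S (i - 1) * lam i + Ψ)
        = (S i * lam i + Ψ) / (S (i - 1) * lam i + Ψ) := by
      rw [eq_div_iff hD.ne', add_mul, one_mul, div_mul_cancel₀ _ hD.ne']
      rw [hstep i hi.1]
      ring
    rw [harg, Real.logb_div hN.ne' hD.ne']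
  have hRHS : (∑ i ∈ Icc 1 K, Real.logb 2 (1 + ρ' i * lam i /
        (∑ j ∈ Icc 1 (i - 1), ρ' j * lam i + Ψ)))
      = ∑ i ∈ Icc 1 K, ((fun i => Real.logb 2 (S' i * lam i + Ψ)) i
          - (fun i => Real.logb 2 (S' (i - 1) * lam i + Ψ)) i) := by
    apply Finset.sum_congr rfl
    intro i hi
    rw [Finset.mem_Icc] at hi
    have hlam : 0 < lam i := hlampos i hi.1 hi.2
    have hD : 0 < S' (i - 1) * lam i + Ψ :=
      add_pos_of_nonneg_of_pos (mul_nonneg (hS'nn (i - 1) (by omega)) hlam.le) hΨ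
    have hN : 0 < S' i * lam i + Ψ :=
      add_pos_of_nonneg_of_pos (mul_nonneg (hS'nn i hi.2) hlam.le) hΨ
    have hden : ∑ j ∈ Icc 1 (i - 1), ρ' j * lam i = S' (i - 1) * lam i := by
      rw [hS'def, Finset.sum_mul]
    rw [hden]
    have harg : 1 + ρ' i * lam i / (S' (i - 1) * lam i + Ψ)
        = (S' i * lam i + Ψ) / (S' (i - 1) * lam i + Ψ) := by
      rw [eq_div_iff hD.ne', add_mul, one_mul, div_mul_cancel₀ _ hD.ne']
      rw [hstep' i hi.1]
      ring
    rw [harg, Real.logb_div hN.ne' hD.ne']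
  rw [hLHS, hRHS,
    abel_rearrange _ _ K hK, abel_rearrange _ _ K hK]
  have hS0 : S 0 = 0 := by simp [hSdef]
  have hS'0 : S' 0 = 0 := by simp [hS'def]
  simp only [Nat.add_sub_cancel, hS0, hS'0, hSK]
  have hsumle : ∑ i ∈ Icc 1 (K - 1),
        (Real.logb 2 (S i * lam i + Ψ) - Real.logb 2 (S i * lam (i + 1) + Ψ))
      ≤ ∑ i ∈ Icc 1 (K - 1),
        (Real.logb 2 (S' i * lam i + Ψ) - Real.logb 2 (S' i * lam (i + 1) + Ψ)) := by
    apply Finset.sum_le_sum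
    intro i hi
    rw [Finset.mem_Icc] at hi
    have hiK : i + 1 ≤ K := by omega
    exact key_mono hΨ (hlampos (i + 1) (by omega) hiK)
      (hlamsort i (i + 1) hi.1 (by omega) hiK)
      (hSnn i (by omega)) (hmono i (by omega))
  linarith
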